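/- For every n ≥ 2, the path P_n on n vertices is defined by a first-order sentence of alternation number at most 1 and quantifier rank strictly less than log₂ n + 3; that is, D¹(P_n) < log₂ n + 3. -/

import Mathlib

namespace FOG

/-- First-order formulas over the vocabulary of (colored) graphs:
equality, adjacency `E`, and unary color predicates `C_i`.
Variables are indexed by natural numbers. -/
inductive Fml : Type
  | eq : ℕ → ℕ → Fml
  | adj : ℕ → ℕ → Fml
  | col : ℕ → ℕ → Fml
  | not : Fml → Fml
  | and : Fml → Fml → Fml
  | or : Fml → Fml → Fml
  | ex : ℕ → Fml → Fml
  | all : ℕ → Fml → Fml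

namespace Fml

/-- Free variables of a formula. -/
def freeVars : Fml → Finset ℕ
  | eq i j => {i, j}
  | adj i j => {i, j}
  | col _ i => {i}
  | not φ => φ.freeVars
  | and φ ψ => φ.freeVars ∪ ψ.freeVars
  | or φ ψ => φ.freeVars ∪ ψ.freeVars
  | ex x φ => φ.freeVars.erase x
  | all x φ => φ.freeVars.erase x

/-- Quantifier rank: maximum depth of nesting of quantifiers. -/
def qr : Fml → ℕ
  | eq _ _ => 0
  | adj _ _ => 0
  | col _ _ => 0
  | not φ => φ.qr
  | and φ ψ => max φ.qr ψ.qr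
  | or φ ψ => max φ.qr ψ.qr
  | ex _ φ => φ.qr + 1
  | all _ φ => φ.qr + 1

/-- The formula uses only the vocabulary `{E, =}` (no color predicates). -/
def noColors : Fml → Prop
  | eq _ _ => True
  | adj _ _ => True
  | col _ _ => False
  | not φ => φ.noColors
  | and φ ψ => φ.noColors ∧ ψ.noColors
  | or φ ψ => φ.noColors ∧ ψ.noColors
  | ex _ φ => φ.noColors
  | all _ φ => φ.noColors

/-- The set (here: list, with possible repetitions) of sequences of nested quantifiers,
`true` standing for `∃` and `false` for `∀`. -/
def nest : Fml → List (List Bool)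
  | eq _ _ => [[]]
  | adj _ _ => [[]]
  | col _ _ => [[]]
  | not φ => φ.nest.map (List.map Bool.not)
  | and φ ψ => φ.nest ++ ψ.nest
  | or φ ψ => φ.nest ++ ψ.nest
  | ex _ φ => φ.nest.map (List.cons true)
  | all _ φ => φ.nest.map (List.cons false)

/-- Number of alternations (occurrences of `∃∀` or `∀∃`) in a sequence of quantifiers. -/
def altCount : List Bool → ℕ
  | [] => 0
  | [_] => 0
  | a :: b :: l => (if a = b then 0 else 1) + altCount (b :: l)

/-- The alternation number of a formula. -/
def altNum (φ : Fml) : ℕ := (φ.nest.map altCount).foldr max 0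

/-- A sentence is a formula with no free variables. -/
def IsSentence (φ : Fml) : Prop := φ.freeVars = ∅

/-- Satisfaction of a formula in a graph `G` with coloring `c` under assignment `ρ`. -/
def Sat {V : Type*} (G : SimpleGraph V) (c : ℕ → V → Prop) (ρ : ℕ → V) : Fml → Prop
  | eq i j => ρ i = ρ j
  | adj i j => G.Adj (ρ i) (ρ j)
  | col k i => c k (ρ i)
  | not φ => ¬ Sat G c ρ φ
  | and φ ψ => Sat G c ρ φ ∧ Sat G c ρ ψ
  | or φ ψ => Sat G c ρ φ ∨ Sat G c ρ ψ
  | ex x φ => ∃ v : V, Sat G c (Function.update ρ x v) φ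
  | all x φ => ∀ v : V, Sat G c (Function.update ρ x v) φ

/-- A formula is true on `(G, c)` if it is satisfied under every assignment. -/
def TrueOn {V : Type*} (G : SimpleGraph V) (c : ℕ → V → Prop) (φ : Fml) : Prop :=
  ∀ ρ : ℕ → V, φ.Sat G c ρ

/-- A formula is false on `(G, c)` if it is satisfied under no assignment. -/
def FalseOn {V : Type*} (G : SimpleGraph V) (c : ℕ → V → Prop) (φ : Fml) : Prop :=
  ∀ ρ : ℕ → V, ¬ φ.Sat G c ρ

end Fml

/-- The trivial (empty) coloring, used to regard plain graphs as colored structures. -/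
def noColoring {V : Type*} : ℕ → V → Prop := fun _ _ => False

/-- A sentence `φ` over `{E, =}` defines the (finite, nonempty) graph `G`:
it is true on `G` and false on every finite graph non-isomorphic to `G`. -/
def Defines {V : Type} (G : SimpleGraph V) (φ : Fml) : Prop :=
  φ.IsSentence ∧ φ.noColors ∧ φ.TrueOn G noColoring ∧
    ∀ (W : Type) [Finite W] [Nonempty W] (H : SimpleGraph W),
      ¬ Nonempty (G ≃g H) → φ.FalseOn H noColoring

/-- `D(G,G')`: minimum quantifier rank of a sentence over `{E, =}` true on `G`
and false on `G'`. -/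
noncomputable def distRank {V W : Type} (G : SimpleGraph V) (H : SimpleGraph W) : ℕ :=
  sInf {r | ∃ φ : Fml, φ.IsSentence ∧ φ.noColors ∧ φ.TrueOn G noColoring ∧
    φ.FalseOn H noColoring ∧ φ.qr = r}

/-- `D^k(G,G')`: as `distRank`, restricted to sentences of alternation number `≤ k`. -/
noncomputable def distRankAlt (k : ℕ) {V W : Type} (G : SimpleGraph V) (H : SimpleGraph W) : ℕ :=
  sInf {r | ∃ φ : Fml, φ.IsSentence ∧ φ.noColors ∧ φ.altNum ≤ k ∧ φ.TrueOn G noColoring ∧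
    φ.FalseOn H noColoring ∧ φ.qr = r}

/-- `D(G)`: minimum quantifier rank of a sentence defining `G`. -/
noncomputable def defRank {V : Type} (G : SimpleGraph V) : ℕ :=
  sInf {r | ∃ φ : Fml, Defines G φ ∧ φ.qr = r}

/-- `D^k(G)`: as `defRank`, restricted to sentences of alternation number `≤ k`. -/
noncomputable def defRankAlt (k : ℕ) {V : Type} (G : SimpleGraph V) : ℕ :=
  sInf {r | ∃ φ : Fml, Defines G φ ∧ φ.altNum ≤ k ∧ φ.qr = r}

/-- A colored graph: a simple graph with unary color predicates, only finitely many
of which are nonempty. -/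
structure ColoredGraph (V : Type*) where
  graph : SimpleGraph V
  color : ℕ → V → Prop
  finColors : {i : ℕ | ∃ v, color i v}.Finite

/-- Isomorphism of colored graphs: a graph isomorphism preserving all colors. -/
def CIso {V W : Type*} (A : ColoredGraph V) (B : ColoredGraph W) : Prop :=
  ∃ f : A.graph ≃g B.graph, ∀ i v, A.color i v ↔ B.color i (f v)

/-- `F` is an `X`-flap of `G`: the vertex set of a connected component of `G - X`. -/
def IsFlap {V : Type*} (G : SimpleGraph V) (X : Set V) (F : Set V) : Prop :=
  ∃ C : (G.induce (Xᶜ : Set V)).ConnectedComponent, F = Subtype.val '' C.supp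

/-- Two `X`-flaps are similar if the identity of `X` extends to an isomorphism
of the induced subgraphs `G[X ∪ F₁]` and `G[X ∪ F₂]`. -/
def SimilarFlaps {V : Type*} (G : SimpleGraph V) (X F₁ F₂ : Set V) : Prop :=
  ∃ f : G.induce (X ∪ F₁) ≃g G.induce (X ∪ F₂),
    ∀ (x : V) (hx : x ∈ X), ((f ⟨x, Or.inl hx⟩ : ↥(X ∪ F₂)) : V) = x

/-- `H` is a minor of `G` (via branch sets). -/
def HasMinor {V W : Type*} (G : SimpleGraph V) (H : SimpleGraph W) : Prop :=
  ∃ B : W → Set V,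
    (∀ w, (B w).Nonempty) ∧
    (∀ w, (G.induce (B w)).Connected) ∧
    (Pairwise fun w₁ w₂ => Disjoint (B w₁) (B w₂)) ∧
    (∀ w₁ w₂, H.Adj w₁ w₂ → ∃ u ∈ B w₁, ∃ v ∈ B w₂, G.Adj u v)

/-- Planarity, via Wagner's characterization: no `K₅` and no `K₃,₃` minor. -/
def Planar {V : Type*} (G : SimpleGraph V) : Prop :=
  ¬ HasMinor G (⊤ : SimpleGraph (Fin 5)) ∧
  ¬ HasMinor G (completeBipartiteGraph (Fin 3) (Fin 3))

/-- Outerplanarity, via the minor characterization: no `K₄` and no `K₂,₃` minor. -/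
def Outerplanar {V : Type*} (G : SimpleGraph V) : Prop :=
  ¬ HasMinor G (⊤ : SimpleGraph (Fin 4)) ∧
  ¬ HasMinor G (completeBipartiteGraph (Fin 2) (Fin 3))

/-- A graph is Hamiltonian if it has a cycle passing through all its vertices. -/
def IsHam {V : Type*} (G : SimpleGraph V) : Prop :=
  ∃ (a : V) (p : G.Walk a a), p.IsCycle ∧ ∀ v : V, v ∈ p.support

/-- The smallest `h` such that `G` has no `K_h` minor. -/
noncomputable def hadwiger {V : Type*} (G : SimpleGraph V) : ℕ :=
  sInf {h : ℕ | ¬ HasMinor G (⊤ : SimpleGraph (Fin h))}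

/-- A rotation system on `G`: a permutation of the darts fixing tails, whose
restriction to the darts at each vertex is a single cycle. -/
structure RotationSystem {V : Type*} (G : SimpleGraph V) where
  σ : Equiv.Perm G.Dart
  fst_fixed : ∀ d : G.Dart, (σ d).toProd.1 = d.toProd.1
  vert_cycle : ∀ d d' : G.Dart, d.toProd.1 = d'.toProd.1 → σ.SameCycle d d'

/-- The dart-reversal involution as a permutation. -/
def dartFlip {V : Type*} (G : SimpleGraph V) : Equiv.Perm G.Dart :=
  ⟨SimpleGraph.Dart.symm, SimpleGraph.Dart.symm,
    fun d => SimpleGraph.Dart.symm_symm d, fun d => SimpleGraph.Dart.symm_symm d⟩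

/-- Number of faces of the embedding given by a rotation system: the number of
orbits of the face permutation `σ ∘ α`. -/
noncomputable def numFaces {V : Type*} (G : SimpleGraph V) (rs : RotationSystem G) : ℕ :=
  Nat.card (Quotient (Setoid.mk (rs.σ * dartFlip G).SameCycle
    ⟨fun _ => Equiv.Perm.SameCycle.refl _ _, Equiv.Perm.SameCycle.symm,
      Equiv.Perm.SameCycle.trans⟩))

/-- `G` (connected) is embeddable in the orientable surface of genus `g`:
by the Heffter–Edmonds principle, some rotation system has Euler genus at most `g`. -/
def GenusAtMost {V : Type*} (G : SimpleGraph V) (g : ℕ) : Prop :=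
  ∃ rs : RotationSystem G,
    (2 : ℤ) - 2 * g ≤ (Nat.card V : ℤ) - Nat.card G.edgeSet + numFaces G rs

end FOG

namespace FOG
open SimpleGraph
open SimpleGraph

/-- There is a walk of length at most `m`. -/
def Wd {V : Type*} (G : SimpleGraph V) (u v : V) (m : ℕ) : Prop :=
  ∃ p : G.Walk u v, p.length ≤ m

variable {V : Type*} {G : SimpleGraph V} {u v : V} {m m' : ℕ}

lemma wd_mono (h : m ≤ m') (hw : Wd G u v m) : Wd G u v m' :=
  hw.imp fun _ hp => hp.trans h

lemma wd_zero : Wd G u v 0 ↔ u = v := by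
  constructor
  · rintro ⟨p, hp⟩
    exact p.eq_of_length_eq_zero (Nat.le_zero.mp hp)
  · rintro rfl; exact ⟨.nil, le_rfl⟩

lemma wd_one : Wd G u v 1 ↔ u = v ∨ G.Adj u v := by
  constructor
  · rintro ⟨p, hp⟩
    cases p with
    | nil => exact Or.inl rfl
    | cons h q =>
      have : q.length = 0 := by rw [Walk.length_cons] at hp; omega
      rw [q.eq_of_length_eq_zero this] at h
      exact Or.inr h
  · rintro (rfl | h)
    · exact ⟨.nil, by simp⟩
    · exact ⟨.cons h .nil, by simp⟩

lemma wd_split {a b : ℕ} : Wd G u v (a + b) ↔ ∃ z, Wd G u z a ∧ Wd G z v b := by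
  constructor
  · induction a generalizing u with
    | zero => exact fun h => ⟨u, ⟨.nil, le_rfl⟩, by simpa using h⟩
    | succ a ih =>
      rintro ⟨p, hp⟩
      cases p with
      | nil => exact ⟨v, ⟨.nil, by simp⟩, ⟨.nil, by simp⟩⟩
      | cons h q =>
        obtain ⟨z, ⟨r, hr⟩, h2⟩ := ih ⟨q, by simp [Walk.length_cons] at hp; omega⟩
        exact ⟨z, ⟨.cons h r, by simp; omega⟩, h2⟩
  · rintro ⟨z, ⟨p, hp⟩, ⟨q, hq⟩⟩
    exact ⟨p.append q, by simp; omega⟩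

lemma wd_dist_le (h : Wd G u v m) : G.dist u v ≤ m :=
  h.elim fun p hp => (SimpleGraph.dist_le p).trans hp

lemma wd_of_reachable (h : G.Reachable u v) : Wd G u v (G.dist u v) :=
  h.exists_walk_length_eq_dist.elim fun p hp => ⟨p, hp.le⟩


/-- Formula expressing that there is a walk of length at most `m` between
variables `x` and `y`, using bound variables `≥ v`. -/
def distF : ℕ → ℕ → ℕ → ℕ → Fml
  | 0, x, y, _ => .eq x y
  | 1, x, y, _ => .or (.eq x y) (.adj x y)
  | m+2, x, y, v => .ex v (.and (distF ((m+3)/2) x v (v+1)) (distF ((m+2)/2) v y (v+1)))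
  termination_by m => m
  decreasing_by all_goals omega

lemma distF_noColors : ∀ m x y v, (distF m x y v).noColors
  | 0, x, y, v => by simp [distF, Fml.noColors]
  | 1, x, y, v => by simp [distF, Fml.noColors]
  | m+2, x, y, v => by
    simp only [distF, Fml.noColors]
    exact ⟨distF_noColors ((m+3)/2) x v (v+1), distF_noColors ((m+2)/2) v y (v+1)⟩
  termination_by m => m
  decreasing_by all_goals omega

lemma distF_freeVars : ∀ m x y v, (distF m x y v).freeVars ⊆ {x, y}
  | 0, x, y, v => by simp [distF, Fml.freeVars]
  | 1, x, y, v => by simp [distF, Fml.freeVars]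
  | m+2, x, y, v => by
    have h1 := distF_freeVars ((m+3)/2) x v (v+1)
    have h2 := distF_freeVars ((m+2)/2) v y (v+1)
    simp only [distF, Fml.freeVars]
    intro a ha
    simp only [Finset.mem_erase, Finset.mem_union] at ha
    obtain ⟨hav, h⟩ := ha
    rcases h with h | h
    · have := h1 h
      simp at this ⊢
      tauto
    · have := h2 h
      simp at this ⊢
      tauto
  termination_by m => m
  decreasing_by all_goals omega

lemma distF_qr : ∀ m x y v, (distF m x y v).qr ≤ Nat.clog 2 m
  | 0, x, y, v => by simp [distF, Fml.qr]
  | 1, x, y, v => by simp [distF, Fml.qr]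
  | m+2, x, y, v => by
    have h1 := distF_qr ((m+3)/2) x v (v+1)
    have h2 := distF_qr ((m+2)/2) v y (v+1)
    have hc : Nat.clog 2 ((m+2)/2) ≤ Nat.clog 2 ((m+3)/2) :=
      Nat.clog_mono_right 2 (by omega)
    have hm : Nat.clog 2 (m+2) = Nat.clog 2 ((m+3)/2) + 1 := by
      have h3 : (m+2+2-1)/2 = (m+3)/2 := by omega
      rw [Nat.clog_of_two_le (by norm_num) (by omega), h3]
    simp only [distF, Fml.qr]
    omega
  termination_by m => m
  decreasing_by all_goals omega

lemma distF_nest : ∀ m x y v, ∀ s ∈ (distF m x y v).nest, ∀ b ∈ s, b = true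
  | 0, x, y, v => by simp [distF, Fml.nest]
  | 1, x, y, v => by simp [distF, Fml.nest]
  | m+2, x, y, v => by
    have h1 := distF_nest ((m+3)/2) x v (v+1)
    have h2 := distF_nest ((m+2)/2) v y (v+1)
    simp only [distF, Fml.nest]
    intro s hs
    simp only [List.mem_map, List.mem_append] at hs
    obtain ⟨t, ht, rfl⟩ := hs
    intro b hb
    rcases List.mem_cons.mp hb with rfl | hb
    · rfl
    · rcases ht with ht | ht
      · exact h1 t ht b hb
      · exact h2 t ht b hb
  termination_by m => m
  decreasing_by all_goals omega

lemma distF_sat {V : Type*} (G : SimpleGraph V) (c : ℕ → V → Prop) :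
    ∀ m x y v, x < v → y < v → ∀ ρ : ℕ → V,
      Fml.Sat G c ρ (distF m x y v) ↔ Wd G (ρ x) (ρ y) m
  | 0, x, y, v => fun hx hy ρ => by
    simp only [distF, Fml.Sat, wd_zero]
  | 1, x, y, v => fun hx hy ρ => by
    simp only [distF, Fml.Sat, wd_one]
  | m+2, x, y, v => fun hx hy ρ => by
    have harith : (m+3)/2 + (m+2)/2 = m + 2 := by omega
    simp only [distF, Fml.Sat]
    constructor
    · rintro ⟨z, h1, h2⟩
      rw [distF_sat G c ((m+3)/2) x v (v+1) (by omega) (by omega)] at h1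
      rw [distF_sat G c ((m+2)/2) v y (v+1) (by omega) (by omega)] at h2
      rw [Function.update_self] at h1 h2
      rw [Function.update_of_ne (by omega)] at h1
      rw [Function.update_of_ne (by omega)] at h2
      rw [← harith, wd_split]
      exact ⟨z, h1, h2⟩
    · intro h
      rw [← harith, wd_split] at h
      obtain ⟨z, h1, h2⟩ := h
      refine ⟨z, ?_, ?_⟩
      · rw [distF_sat G c ((m+3)/2) x v (v+1) (by omega) (by omega)]
        rw [Function.update_self, Function.update_of_ne (by omega)]
        exact h1
      · rw [distF_sat G c ((m+2)/2) v y (v+1) (by omega) (by omega)]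
        rw [Function.update_self, Function.update_of_ne (by omega)]
        exact h2
  termination_by m => m
  decreasing_by all_goals omega

theorem iso_path {V : Type} [Fintype V] [Nonempty V] (H : SimpleGraph V) (n : ℕ) (hn : 2 ≤ n)
    (hdeg : ∀ z a b c : V, H.Adj z a → H.Adj z b → H.Adj z c → a = b ∨ a = c ∨ b = c)
    (w : V) (hw : ∀ a b : V, H.Adj w a → H.Adj w b → a = b)
    (u v : V) (huv : ¬ Wd H u v (n-2))
    (hall : ∀ x y : V, Wd H x y (n-1)) :
    Nonempty (H ≃g SimpleGraph.pathGraph n) := by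
  have reach : ∀ x y : V, H.Reachable x y := fun x y => (hall x y).elim fun p _ => ⟨p⟩
  have hconn : H.Connected := ⟨reach⟩
  set d : V → ℕ := H.dist w with hd
  have adj_dist : ∀ x y : V, H.Adj x y → H.dist x y = 1 := fun x y h =>
    SimpleGraph.dist_eq_one_iff_adj.mpr h
  -- predecessor in BFS layers
  have pred : ∀ (x : V) (k : ℕ), d x = k + 1 → ∃ x', H.Adj x x' ∧ d x' = k := by
    intro x k hk
    have hxw : H.dist x w = k + 1 := by rw [SimpleGraph.dist_comm]; exact hk
    obtain ⟨p, hp⟩ := (reach x w).exists_walk_length_eq_dist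
    rw [hxw] at hp
    cases p with
    | nil => simp at hp
    | @cons _ b _ h q =>
      refine ⟨b, h, ?_⟩
      have hq : q.length = k := by simp [SimpleGraph.Walk.length_cons] at hp; omega
      have h1 : H.dist w b ≤ k := by
        rw [SimpleGraph.dist_comm]; exact (SimpleGraph.dist_le q).trans hq.le
      have h2 : H.dist w x ≤ H.dist w b + H.dist b x := hconn.dist_triangle
      have h3 : H.dist b x = 1 := adj_dist b x h.symm
      have h4 : d x = k + 1 := hk
      simp only [hd] at h4 ⊢
      omega
  -- each layer contains at most one vertex
  have uniq : ∀ (k : ℕ) (x y : V), d x = k → d y = k → x = y := by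
    intro k
    induction k using Nat.strong_induction_on with
    | _ k ih =>
      intro x y hx hy
      match k, hx, hy with
      | 0, hx, hy =>
        have hx' : x = w := ((reach w x).dist_eq_zero_iff.mp hx).symm
        have hy' : y = w := ((reach w y).dist_eq_zero_iff.mp hy).symm
        rw [hx', hy']
      | (j+1), hx, hy =>
        obtain ⟨x', hxa, hx'⟩ := pred x j hx
        obtain ⟨y', hya, hy'⟩ := pred y j hy
        have hxy : x' = y' := ih j (by omega) x' y' hx' hy'
        subst hxy
        match j, hx' with
        | 0, hx' =>
          have : x' = w := ((reach w x').dist_eq_zero_iff.mp hx').symm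
          subst this
          exact hw x y hxa.symm hya.symm
        | (i+1), hx' =>
          obtain ⟨x'', hxa2, hx''⟩ := pred x' i hx'
          rcases hdeg x' x y x'' hxa.symm hya.symm hxa2 with h | h | h
          · exact h
          · exfalso; rw [h] at hx; omega
          · exfalso; rw [h] at hy; omega
  -- every smaller layer is inhabited
  have exists_layer : ∀ (x : V) (j : ℕ), j ≤ d x → ∃ z, d z = j := by
    intro x j hj
    have h1 : Wd H w x (j + (d x - j)) := by
      have h := wd_of_reachable (reach w x)
      rwa [show H.dist w x = j + (d x - j) from by simp only [hd] at hj ⊢; omega] at h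
    obtain ⟨z, hz1, hz2⟩ := wd_split.mp h1
    have h2 : d z ≤ j := wd_dist_le hz1
    have h3 : H.dist z x ≤ d x - j := wd_dist_le hz2
    have h4 : d x ≤ d z + H.dist z x := hconn.dist_triangle
    exact ⟨z, by omega⟩
  -- adjacency moves between consecutive layers
  have adj_le : ∀ x y : V, H.Adj x y → d y ≤ d x + 1 := by
    intro x y h
    have h1 : H.dist w y ≤ H.dist w x + H.dist x y := hconn.dist_triangle
    rw [adj_dist x y h] at h1
    exact h1
  have succ_adj : ∀ x y : V, d y = d x + 1 → H.Adj x y := by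
    intro x y h
    obtain ⟨y', hya, hy'⟩ := pred y (d x) h
    rw [uniq (d x) y' x hy' rfl] at hya
    exact hya.symm
  -- walks along layers
  have climb : ∀ (k : ℕ) (x y : V), d y = d x + k → Wd H x y k := by
    intro k
    induction k with
    | zero => intro x y h; rw [uniq (d x) x y rfl (by omega)]; exact ⟨.nil, le_rfl⟩
    | succ k ih =>
      intro x y h
      obtain ⟨z, hz⟩ := exists_layer y (d x + k) (by omega)
      obtain ⟨p, hp⟩ := ih x z hz
      have hadj : H.Adj z y := succ_adj z y (by omega)
      exact ⟨p.concat hadj, by simp [SimpleGraph.Walk.length_concat]; omega⟩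
  -- the maximum layer
  obtain ⟨t, ht⟩ := Finite.exists_max d
  have hD1 : d t ≤ n - 1 := wd_dist_le (hall w t)
  have hduv1 : H.dist u v ≤ n - 1 := wd_dist_le (hall u v)
  have hduv2 : ¬ H.dist u v ≤ n - 2 := fun h =>
    huv (wd_mono h (wd_of_reachable (reach u v)))
  have hduv : H.dist u v = n - 1 := by omega
  have hdistle : H.dist u v ≤ d t := by
    rcases le_total (d u) (d v) with h | h
    · have := wd_dist_le (climb (d v - d u) u v (by omega))
      have := ht v
      omega
    · have h1 := wd_dist_le (climb (d u - d v) v u (by omega))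
      rw [SimpleGraph.dist_comm] at h1
      have := ht u
      omega
  have hD : d t = n - 1 := by omega
  -- the isomorphism
  have hlt : ∀ x : V, d x < n := fun x => by have := ht x; omega
  let e : V → Fin n := fun x => ⟨d x, hlt x⟩
  have hinj : Function.Injective e := by
    intro a b h
    exact uniq (d a) a b rfl (by simpa [e, Fin.mk.injEq] using h.symm)
  have hsurj : Function.Surjective e := by
    rintro ⟨j, hj⟩
    obtain ⟨z, hz⟩ := exists_layer t j (by omega)
    exact ⟨z, by simp [e, hz]⟩
  refine ⟨⟨Equiv.ofBijective e ⟨hinj, hsurj⟩, ?_⟩⟩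
  intro a b
  show (SimpleGraph.pathGraph n).Adj (e a) (e b) ↔ H.Adj a b
  rw [SimpleGraph.pathGraph_adj]
  show (d a + 1 = d b ∨ d b + 1 = d a) ↔ _
  constructor
  · rintro (h | h)
    · exact succ_adj a b h.symm
    · exact (succ_adj b a h.symm).symm
  · intro h
    have h1 := adj_le a b h
    have h2 := adj_le b a h.symm
    have h3 : d a ≠ d b := fun hh => h.ne (uniq (d a) a b rfl hh.symm)
    omega

section PathGraphFacts
open SimpleGraph

lemma pg_deg (n : ℕ) : ∀ z a b c : Fin n, (pathGraph n).Adj z a → (pathGraph n).Adj z b →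
    (pathGraph n).Adj z c → a = b ∨ a = c ∨ b = c := by
  intro z a b c ha hb hc
  rw [pathGraph_adj] at ha hb hc
  have h : (a : ℕ) = b ∨ (a : ℕ) = c ∨ (b : ℕ) = c := by omega
  rcases h with h | h | h
  · exact Or.inl (Fin.ext h)
  · exact Or.inr (Or.inl (Fin.ext h))
  · exact Or.inr (Or.inr (Fin.ext h))

lemma pg_leaf (n : ℕ) (hn : 2 ≤ n) : ∀ a b : Fin n,
    (pathGraph n).Adj ⟨0, by omega⟩ a → (pathGraph n).Adj ⟨0, by omega⟩ b → a = b := by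
  intro a b ha hb
  rw [pathGraph_adj] at ha hb
  simp only at ha hb
  exact Fin.ext (by omega)

lemma pg_walk_up {n : ℕ} : ∀ (k : ℕ) (i j : Fin n), (i : ℕ) + k = (j : ℕ) →
    ∃ p : (pathGraph n).Walk i j, p.length = k := by
  intro k
  induction k with
  | zero =>
    intro i j h
    have : i = j := Fin.ext (by omega)
    subst this
    exact ⟨.nil, rfl⟩
  | succ k ih =>
    intro i j h
    have hi1 : (i : ℕ) + 1 < n := by have := j.is_lt; omega
    have hadj : (pathGraph n).Adj i ⟨(i : ℕ) + 1, hi1⟩ :=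
      pathGraph_adj.mpr (Or.inl rfl)
    obtain ⟨p, hp⟩ := ih ⟨(i : ℕ) + 1, hi1⟩ j (by simp; omega)
    exact ⟨.cons hadj p, by simp [hp]⟩

lemma pg_hall (n : ℕ) : ∀ x y : Fin n, Wd (pathGraph n) x y (n - 1) := by
  intro x y
  have hx := x.is_lt
  have hy := y.is_lt
  rcases le_total (x : ℕ) (y : ℕ) with h | h
  · obtain ⟨p, hp⟩ := pg_walk_up ((y : ℕ) - x) x y (by omega)
    exact ⟨p, by omega⟩
  · obtain ⟨p, hp⟩ := pg_walk_up ((x : ℕ) - y) y x (by omega)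
    exact ⟨p.reverse, by simp [hp]; omega⟩

lemma pg_lower {n : ℕ} : ∀ {i j : Fin n} (p : (pathGraph n).Walk i j),
    ((j : ℕ) : ℤ) - ((i : ℕ) : ℤ) ≤ p.length ∧ ((i : ℕ) : ℤ) - ((j : ℕ) : ℤ) ≤ p.length := by
  intro i j p
  induction p with
  | nil => simp
  | @cons a b c h q ih =>
    rw [pathGraph_adj] at h
    obtain ⟨h1, h2⟩ := ih
    simp only [Walk.length_cons]
    push_cast
    omega

lemma pg_not_short (n : ℕ) (hn : 2 ≤ n) :
    ¬ Wd (pathGraph n) ⟨0, by omega⟩ ⟨n - 1, by omega⟩ (n - 2) := by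
  rintro ⟨p, hp⟩
  have h := (pg_lower p).1
  simp only at h
  have : ((n : ℤ) - 1) - 0 ≤ p.length := by push_cast at h ⊢; omega
  omega

end PathGraphFacts

/-- "Every vertex has degree at most 2." -/
def degFml : Fml :=
  .all 0 (.all 1 (.all 2 (.all 3 (.or (.not (.and (.adj 0 1) (.and (.adj 0 2) (.adj 0 3))))
    (.or (.eq 1 2) (.or (.eq 1 3) (.eq 2 3)))))))

/-- "Some vertex has degree at most 1." -/
def leafFml : Fml :=
  .ex 0 (.all 1 (.all 2 (.or (.not (.and (.adj 0 1) (.adj 0 2))) (.eq 1 2))))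

/-- "Some two vertices are at distance more than n-2, and any two are at distance
at most n-1." -/
def diamFml (n : ℕ) : Fml :=
  .and (.ex 0 (.ex 1 (.not (distF (n-2) 0 1 2)))) (.all 0 (.all 1 (distF (n-1) 0 1 2)))

/-- The defining sentence for the path graph. -/
def pathFml (n : ℕ) : Fml :=
  if n = 2 then .and leafFml (diamFml n) else .and (.and degFml leafFml) (diamFml n)

section SatChar

variable {V : Type*} (G : SimpleGraph V) (c : ℕ → V → Prop) (ρ : ℕ → V)

lemma sat_degFml :
    Fml.Sat G c ρ degFml ↔
      ∀ z a b c' : V, G.Adj z a → G.Adj z b → G.Adj z c' → a = b ∨ a = c' ∨ b = c' := by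
  simp only [degFml, Fml.Sat]
  constructor
  · intro h z a b c' h1 h2 h3
    have := h z a b c'
    simp [Function.update] at this
    tauto
  · intro h z a b c'
    have := h z a b c'
    simp [Function.update]
    tauto

lemma sat_leafFml :
    Fml.Sat G c ρ leafFml ↔ ∃ z : V, ∀ a b : V, G.Adj z a → G.Adj z b → a = b := by
  simp only [leafFml, Fml.Sat]
  constructor
  · rintro ⟨z, h⟩
    refine ⟨z, fun a b h1 h2 => ?_⟩
    have := h a b
    simp [Function.update] at this
    tauto
  · rintro ⟨z, h⟩
    refine ⟨z, fun a b => ?_⟩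
    have := h a b
    simp [Function.update]
    tauto

lemma sat_diamFml (n : ℕ) :
    Fml.Sat G c ρ (diamFml n) ↔
      (∃ a b : V, ¬ Wd G a b (n-2)) ∧ ∀ a b : V, Wd G a b (n-1) := by
  simp only [diamFml, Fml.Sat]
  constructor
  · rintro ⟨⟨a, b, h1⟩, h2⟩
    constructor
    · refine ⟨a, b, fun hwd => h1 ?_⟩
      rw [distF_sat G c (n-2) 0 1 2 (by omega) (by omega)]
      simpa [Function.update] using hwd
    · intro a b
      have := h2 a b
      rw [distF_sat G c (n-1) 0 1 2 (by omega) (by omega)] at this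
      simpa [Function.update] using this
  · rintro ⟨⟨a, b, h1⟩, h2⟩
    constructor
    · refine ⟨a, b, fun hs => h1 ?_⟩
      rw [distF_sat G c (n-2) 0 1 2 (by omega) (by omega)] at hs
      simpa [Function.update] using hs
    · intro a b
      rw [distF_sat G c (n-1) 0 1 2 (by omega) (by omega)]
      simpa [Function.update] using h2 a b

end SatChar

section Syntactic

lemma erase_sub_01 (s : Finset ℕ) (h : s ⊆ {0, 1}) : (s.erase 1).erase 0 = ∅ := by
  rw [Finset.eq_empty_iff_forall_notMem]
  intro a ha
  simp only [Finset.mem_erase] at ha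
  obtain ⟨h0, h1, hs⟩ := ha
  have := h hs
  simp at this
  tauto

lemma diamFml_freeVars (n : ℕ) : (diamFml n).freeVars = ∅ := by
  simp only [diamFml, Fml.freeVars]
  rw [erase_sub_01 _ (distF_freeVars (n-2) 0 1 2),
    erase_sub_01 _ (distF_freeVars (n-1) 0 1 2)]
  rfl

lemma pathFml_sentence (n : ℕ) : (pathFml n).IsSentence := by
  have hdeg : degFml.freeVars = ∅ := by decide
  have hleaf : leafFml.freeVars = ∅ := by decide
  have hdiam := diamFml_freeVars n
  unfold pathFml
  split
  · show leafFml.freeVars ∪ (diamFml n).freeVars = ∅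
    rw [hleaf, hdiam]; rfl
  · show (degFml.freeVars ∪ leafFml.freeVars) ∪ (diamFml n).freeVars = ∅
    rw [hdeg, hleaf, hdiam]; rfl

lemma pathFml_noColors (n : ℕ) : (pathFml n).noColors := by
  have h2 : (diamFml n).noColors :=
    ⟨distF_noColors (n-2) 0 1 2, distF_noColors (n-1) 0 1 2⟩
  have hdeg : degFml.noColors := by simp [degFml, Fml.noColors]
  have hleaf : leafFml.noColors := by simp [leafFml, Fml.noColors]
  unfold pathFml
  split
  · exact ⟨hleaf, h2⟩
  · exact ⟨⟨hdeg, hleaf⟩, h2⟩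

lemma altCount_const (c : Bool) : ∀ l : List Bool, (∀ x ∈ l, x = c) → Fml.altCount l = 0 := by
  intro l
  induction l with
  | nil => intro; rfl
  | cons a l ih =>
    intro h
    cases l with
    | nil => rfl
    | cons b l' =>
      have ha : a = c := h a (by simp)
      have hb : b = c := h b (by simp)
      rw [Fml.altCount, if_pos (ha.trans hb.symm), ih (fun x hx => h x (by simp [hx]))]

lemma altCount_cons_const (a : Bool) (c : Bool) :
    ∀ l : List Bool, (∀ x ∈ l, x = c) → Fml.altCount (a :: l) ≤ 1 := by
  intro l h
  cases l with
  | nil => simp [Fml.altCount]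
  | cons b l' =>
    rw [Fml.altCount, altCount_const c (b :: l') h]
    split <;> omega

lemma altCount_cons_cons (a : Bool) (l : List Bool) :
    Fml.altCount (a :: a :: l) = Fml.altCount (a :: l) := by
  rw [Fml.altCount, if_pos rfl, Nat.zero_add]

lemma foldr_max_le (k : ℕ) : ∀ l : List ℕ, (∀ x ∈ l, x ≤ k) → l.foldr max 0 ≤ k := by
  intro l
  induction l with
  | nil => intro; simp
  | cons a l ih =>
    intro h
    simp only [List.foldr_cons]
    exact max_le (h a (by simp)) (ih fun x hx => h x (by simp [hx]))

lemma diamFml_nest (n : ℕ) : ∀ s ∈ (diamFml n).nest, Fml.altCount s ≤ 1 := by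
  intro s hs
  have hs' : s ∈ (Fml.ex 0 (Fml.ex 1 (.not (distF (n-2) 0 1 2)))).nest ∨
      s ∈ (Fml.all 0 (Fml.all 1 (distF (n-1) 0 1 2))).nest := List.mem_append.mp hs
  rcases hs' with h | h
  · obtain ⟨t, ht, rfl⟩ := List.mem_map.mp h
    obtain ⟨t', ht', rfl⟩ := List.mem_map.mp ht
    obtain ⟨t'', ht'', rfl⟩ := List.mem_map.mp ht'
    rw [altCount_cons_cons]
    apply altCount_cons_const true false
    intro x hx
    obtain ⟨y, hy, rfl⟩ := List.mem_map.mp hx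
    rw [distF_nest (n-2) 0 1 2 t'' ht'' y hy]
    rfl
  · obtain ⟨t, ht, rfl⟩ := List.mem_map.mp h
    obtain ⟨t', ht', rfl⟩ := List.mem_map.mp ht
    rw [altCount_cons_cons]
    exact altCount_cons_const false true t' (distF_nest (n-1) 0 1 2 t' ht')

lemma pathFml_altNum (n : ℕ) : (pathFml n).altNum ≤ 1 := by
  apply foldr_max_le
  intro x hx
  obtain ⟨s, hs, rfl⟩ := List.mem_map.mp hx
  have hdeg : ∀ s ∈ degFml.nest, Fml.altCount s ≤ 1 := by decide
  have hleaf : ∀ s ∈ leafFml.nest, Fml.altCount s ≤ 1 := by decide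
  have hdiam := diamFml_nest n
  revert hs
  unfold pathFml
  split
  · intro hs
    rcases (List.mem_append.mp hs : s ∈ leafFml.nest ∨ s ∈ (diamFml n).nest) with h | h
    · exact hleaf _ h
    · exact hdiam _ h
  · intro hs
    rcases (List.mem_append.mp hs :
        s ∈ (Fml.and degFml leafFml).nest ∨ s ∈ (diamFml n).nest) with h | h
    · rcases (List.mem_append.mp h : s ∈ degFml.nest ∨ s ∈ leafFml.nest) with h' | h'
      · exact hdeg _ h'
      · exact hleaf _ h'
    · exact hdiam _ h

lemma pathFml_qr (n : ℕ) :
    (pathFml n).qr ≤ max 4 (2 + Nat.clog 2 (n-1)) := by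
  have h1 : (distF (n-2) 0 1 2).qr ≤ Nat.clog 2 (n-1) :=
    (distF_qr (n-2) 0 1 2).trans (Nat.clog_mono_right 2 (by omega))
  have h2 : (distF (n-1) 0 1 2).qr ≤ Nat.clog 2 (n-1) := distF_qr (n-1) 0 1 2
  have hdeg : degFml.qr = 4 := by decide
  have hleaf : leafFml.qr = 3 := by decide
  have hdiam : (diamFml n).qr ≤ 2 + Nat.clog 2 (n-1) := by
    simp only [diamFml, Fml.qr]
    omega
  unfold pathFml
  split <;> simp only [Fml.qr, hdeg, hleaf] <;> omega

end Syntactic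

open SimpleGraph in
theorem pathFml_defines (n : ℕ) (hn : 2 ≤ n) :
    Defines (SimpleGraph.pathGraph n) (pathFml n) := by
  refine ⟨pathFml_sentence n, pathFml_noColors n, ?_, ?_⟩
  · -- true on the path
    intro ρ
    have hdiam : Fml.Sat (pathGraph n) noColoring ρ (diamFml n) :=
      (sat_diamFml _ _ _ n).mpr
        ⟨⟨⟨0, by omega⟩, ⟨n-1, by omega⟩, pg_not_short n hn⟩, fun a b => pg_hall n a b⟩
    have hleaf : Fml.Sat (pathGraph n) noColoring ρ leafFml :=
      (sat_leafFml _ _ _).mpr ⟨⟨0, by omega⟩, pg_leaf n hn⟩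
    have hdegs : Fml.Sat (pathGraph n) noColoring ρ degFml :=
      (sat_degFml _ _ _).mpr (pg_deg n)
    unfold pathFml
    split
    · exact ⟨hleaf, hdiam⟩
    · exact ⟨⟨hdegs, hleaf⟩, hdiam⟩
  · -- false on every non-isomorphic finite graph
    intro W _ _ H hniso ρ hsat
    cases nonempty_fintype W
    apply hniso
    unfold pathFml at hsat
    by_cases h2 : n = 2
    · rw [if_pos h2] at hsat
      obtain ⟨hleaf, hdiam⟩ := hsat
      obtain ⟨w, hw⟩ := (sat_leafFml _ _ _).mp hleaf
      obtain ⟨⟨u, v, huv⟩, hall⟩ := (sat_diamFml _ _ _ n).mp hdiam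
      subst h2
      have two : ∀ x y : W, x ≠ w → y ≠ w → x = y := by
        intro x y hx hy
        have h1 : (w : W) = x ∨ H.Adj w x := wd_one.mp (hall w x)
        have h2' : (w : W) = y ∨ H.Adj w y := wd_one.mp (hall w y)
        rcases h1 with h1 | h1
        · exact absurd h1.symm hx
        rcases h2' with h2' | h2'
        · exact absurd h2'.symm hy
        exact hw x y h1 h2'
      have hdeg : ∀ z a b c : W, H.Adj z a → H.Adj z b → H.Adj z c →
          a = b ∨ a = c ∨ b = c := by
        intro z a b c ha hb hc
        by_cases hab : a = w
        · by_cases hbb : b = w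
          · exact Or.inl (hab.trans hbb.symm)
          by_cases hcc : c = w
          · exact Or.inr (Or.inl (hab.trans hcc.symm))
          · exact Or.inr (Or.inr (two b c hbb hcc))
        · by_cases hbb : b = w
          · by_cases hcc : c = w
            · exact Or.inr (Or.inr (hbb.trans hcc.symm))
            · exact Or.inr (Or.inl (two a c hab hcc))
          · exact Or.inl (two a b hab hbb)
      exact ⟨(iso_path H 2 (by omega) hdeg w hw u v huv hall).some.symm⟩
    · rw [if_neg h2] at hsat
      obtain ⟨⟨hdegs, hleaf⟩, hdiam⟩ := hsat
      obtain ⟨w, hw⟩ := (sat_leafFml _ _ _).mp hleaf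
      obtain ⟨⟨u, v, huv⟩, hall⟩ := (sat_diamFml _ _ _ n).mp hdiam
      have hdeg := (sat_degFml _ _ _).mp hdegs
      exact ⟨(iso_path H n hn hdeg w hw u v huv hall).some.symm⟩

end FOG


/-- For `n ≥ 2`, the path `P_n` is defined by a sentence of alternation
number at most 1 and quantifier rank less than `log₂ n + 3`. -/
theorem path_definability (n : ℕ) (hn : 2 ≤ n) :
    ∃ φ : FOG.Fml, FOG.Defines (SimpleGraph.pathGraph n) φ ∧ φ.altNum ≤ 1 ∧
      (φ.qr : ℝ) < Real.logb 2 n + 3 := by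
  refine ⟨FOG.pathFml n, FOG.pathFml_defines n hn, FOG.pathFml_altNum n, ?_⟩
  by_cases h2 : n = 2
  · subst h2
    have hq : (FOG.pathFml 2).qr = 3 := by
      simp [FOG.pathFml, FOG.diamFml, FOG.leafFml, FOG.distF, FOG.Fml.qr]
    rw [hq]
    have h1 : Real.logb 2 ((2:ℕ):ℝ) = 1 := by
      push_cast
      exact Real.logb_self_eq_one (by norm_num)
    rw [h1]
    norm_num
  · have h3 : 3 ≤ n := by omega
    have hq := FOG.pathFml_qr n
    have hb : (1:ℝ) < 2 := by norm_num
    have hc : (Nat.clog 2 (n-1) : ℝ) < Real.logb 2 n + 1 := by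
      set c := Nat.clog 2 (n-1) with hcdef
      have hc1 : 0 < c := Nat.clog_pos (by norm_num) (by omega)
      have hpow : 2 ^ (c - 1) < n - 1 := Nat.pow_pred_clog_lt_self (by norm_num) (by omega)
      have hr : ((2:ℝ)) ^ (c - 1) < (n:ℝ) := by
        calc ((2:ℝ)) ^ (c-1) = ((2^(c-1) : ℕ) : ℝ) := by push_cast; ring
        _ < ((n - 1 : ℕ) : ℝ) := by exact_mod_cast hpow
        _ ≤ (n : ℝ) := Nat.cast_le.mpr (by omega)
      have h0 : ((c - 1 : ℕ) : ℝ) < Real.logb 2 n := by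
        have hh := Real.logb_lt_logb hb (pow_pos (by norm_num : (0:ℝ) < 2) (c-1)) hr
        rwa [Real.logb_pow, Real.logb_self_eq_one (by norm_num), mul_one] at hh
      have hcast : ((c - 1 : ℕ) : ℝ) = (c:ℝ) - 1 := by
        rw [Nat.cast_sub hc1]; norm_num
      rw [hcast] at h0
      linarith
    have h4 : (4:ℝ) < Real.logb 2 n + 3 := by
      have h1 : (1:ℝ) < Real.logb 2 n := by
        have hh := Real.logb_lt_logb hb (by norm_num : (0:ℝ) < 2)
          (show (2:ℝ) < (n:ℝ) by exact_mod_cast (by omega : 2 < n))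
        rwa [Real.logb_self_eq_one (by norm_num)] at hh
      linarith
    have hle : ((FOG.pathFml n).qr : ℝ) ≤ max 4 (2 + (Nat.clog 2 (n-1) : ℝ)) := by
      calc ((FOG.pathFml n).qr : ℝ) ≤ ((max 4 (2 + Nat.clog 2 (n-1)) : ℕ) : ℝ) :=
        Nat.cast_le.mpr hq
      _ = max 4 (2 + (Nat.clog 2 (n-1):ℝ)) := by push_cast; rfl
    exact lt_of_le_of_lt hle (max_lt h4 (by linarith))
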